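/- Let n, d ∈ ℕ and let r : Fin d → (formal power series in the variables Fin n ⊕ Fin d over ℝ) be such that for each j, every coefficient of r j in total degree ≤ 1 vanishes (r j has order ≥ 2). Then there exists a unique family v : Fin d → (formal power series in the variables Fin n over ℝ) with zero constant terms such that for every j, v j equals the substitution of the family (Sum.inl i ↦ X_i, Sum.inr l ↦ v l) into r j; that is, v is the unique formal solution with zero constant term of the system v = r(x, v). -/

import Mathlib

open MvPowerSeries

open Classical in
/-- The finite set of multi-indices on a finite type `σ` of total degree at most `k`. -/
noncomputable def degLE (σ : Type*) [Fintype σ] (k : ℕ) : Finset (σ →₀ ℕ) :=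
  (Finset.Iic (Finsupp.equivFunOnFinite.symm (fun _ : σ => k))).filter
    (fun d => (d.sum fun _ n => n) ≤ k)

/-- Truncation of a multivariate power series to total degree at most `k`,
as a multivariate polynomial. -/
noncomputable def truncTotalDeg {σ : Type*} [Fintype σ] (k : ℕ)
    (f : MvPowerSeries σ ℝ) : MvPolynomial σ ℝ :=
  ∑ d ∈ degLE σ k, MvPolynomial.monomial d (MvPowerSeries.coeff d f)

/-- Substitution of the family `g` (assumed to have zero constant terms) into
the power series `f`: the coefficient at the multi-index `e` only involves
the terms of `f` of total degree at most `|e|`. -/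
noncomputable def psSubst {σ τ : Type*} [Fintype σ]
    (f : MvPowerSeries σ ℝ) (g : σ → MvPowerSeries τ ℝ) : MvPowerSeries τ ℝ :=
  fun e => MvPowerSeries.coeff e
    (MvPolynomial.aeval g (truncTotalDeg (e.sum fun _ n => n) f))

namespace FIFT

variable {τ : Type*}

/-- `f` has order ≥ N : all coefficients in total degree < N vanish. -/
def ordGe (N : ℕ) (f : MvPowerSeries τ ℝ) : Prop :=
  ∀ e : τ →₀ ℕ, (e.sum fun _ n => n) < N → MvPowerSeries.coeff e f = 0

theorem ordGe_zero (N : ℕ) : ordGe N (0 : MvPowerSeries τ ℝ) := by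
  intro e _; simp

theorem ordGe_of_le {a b : ℕ} (h : a ≤ b) {f : MvPowerSeries τ ℝ} (hf : ordGe b f) :
    ordGe a f := fun e he => hf e (lt_of_lt_of_le he h)

theorem ordGe_add {N : ℕ} {f g : MvPowerSeries τ ℝ} (hf : ordGe N f) (hg : ordGe N g) :
    ordGe N (f + g) := by
  intro e he; rw [map_add, hf e he, hg e he, add_zero]

theorem wt_add (a b : τ →₀ ℕ) :
    ((a + b).sum fun _ n => n) = (a.sum fun _ n => n) + (b.sum fun _ n => n) :=
  Finsupp.sum_add_index' (fun _ => rfl) (fun _ _ _ => rfl)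

theorem ordGe_mul {a b : ℕ} {f g : MvPowerSeries τ ℝ} (hf : ordGe a f) (hg : ordGe b g) :
    ordGe (a + b) (f * g) := by
  classical
  intro e he
  rw [MvPowerSeries.coeff_mul]
  apply Finset.sum_eq_zero
  intro p hp
  rw [Finset.HasAntidiagonal.mem_antidiagonal] at hp
  have hsum : (p.1.sum fun _ n => n) + (p.2.sum fun _ n => n) = e.sum fun _ n => n := by
    rw [← hp, wt_add]
  rcases lt_or_ge (p.1.sum fun _ n => n) a with h | h
  · rw [hf _ h, zero_mul]
  · rw [hg _ (by omega), mul_zero]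

theorem ordGe_pow {f : MvPowerSeries τ ℝ} (hf : ordGe 1 f) (k : ℕ) : ordGe k (f ^ k) := by
  induction k with
  | zero => intro e he; omega
  | succ m ih =>
      rw [pow_succ]
      exact ordGe_of_le (le_of_eq (by omega)) (ordGe_mul ih hf)

theorem ordGe_pow_sub {f f' : MvPowerSeries τ ℝ} {N : ℕ} (hN : 1 ≤ N)
    (hf : ordGe 1 f) (hf' : ordGe 1 f') (hd : ordGe N (f - f')) (k : ℕ) :
    ordGe (N + k - 1) (f ^ k - f' ^ k) := by
  induction k with
  | zero => simpa using ordGe_zero _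
  | succ m ih =>
      have key : f ^ (m + 1) - f' ^ (m + 1) = (f - f') * f' ^ m + f * (f ^ m - f' ^ m) := by
        ring
      rw [key]
      apply ordGe_add
      · exact ordGe_of_le (le_of_eq (by omega)) (ordGe_mul hd (ordGe_pow hf' m))
      · exact ordGe_of_le (le_of_eq (by omega)) (ordGe_mul hf ih)

theorem ordGe_finsuppProd {σ : Type*} {g : σ → MvPowerSeries τ ℝ}
    (hg : ∀ i, ordGe 1 (g i)) (dd : σ →₀ ℕ) :
    ordGe (dd.sum fun _ n => n) (dd.prod fun i k => g i ^ k) := by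
  induction dd using Finsupp.induction with
  | zero => intro e he; simp at he
  | single_add a b f haf hb ih =>
      rw [Finsupp.prod_add_index' (fun i => pow_zero _) (fun i m1 m2 => pow_add _ _ _),
        Finsupp.sum_add_index' (fun _ => rfl) (fun _ _ _ => rfl),
        Finsupp.prod_single_index (h := fun i k => g i ^ k) (pow_zero _),
        Finsupp.sum_single_index rfl]
      exact ordGe_mul (ordGe_pow (hg a) b) ih

theorem ordGe_prod_sub {σ : Type*} {g g' : σ → MvPowerSeries τ ℝ} {N : ℕ} (hN : 1 ≤ N)
    (hg : ∀ i, ordGe 1 (g i)) (hg' : ∀ i, ordGe 1 (g' i))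
    (hd : ∀ i, ordGe N (g i - g' i)) (dd : σ →₀ ℕ) :
    ordGe (N + (dd.sum fun _ n => n) - 1)
      ((dd.prod fun i k => g i ^ k) - (dd.prod fun i k => g' i ^ k)) := by
  induction dd using Finsupp.induction with
  | zero => simpa using ordGe_zero _
  | single_add a b f haf hb ih =>
      rw [Finsupp.prod_add_index' (fun i => pow_zero _) (fun i m1 m2 => pow_add _ _ _),
        Finsupp.prod_add_index' (fun i => pow_zero _) (fun i m1 m2 => pow_add _ _ _),
        Finsupp.sum_add_index' (fun _ => rfl) (fun _ _ _ => rfl),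
        Finsupp.prod_single_index (h := fun i k => g i ^ k) (pow_zero _),
        Finsupp.prod_single_index (h := fun i k => g' i ^ k) (pow_zero _),
        Finsupp.sum_single_index rfl]
      set P := f.prod fun i k => g i ^ k
      set P' := f.prod fun i k => g' i ^ k
      have key : g a ^ b * P - g' a ^ b * P' =
          (g a ^ b - g' a ^ b) * P' + g a ^ b * (P - P') := by ring
      rw [key]
      have hb1 : 1 ≤ b := Nat.one_le_iff_ne_zero.mpr hb
      apply ordGe_add
      · exact ordGe_of_le (le_of_eq (by omega))
          (ordGe_mul (ordGe_pow_sub hN (hg a) (hg' a) (hd a) b) (ordGe_finsuppProd hg' f))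
      · exact ordGe_of_le (le_of_eq (by omega)) (ordGe_mul (ordGe_pow (hg a) b) ih)

theorem coeff_psSubst {σ : Type*} [Fintype σ] (f : MvPowerSeries σ ℝ)
    (g : σ → MvPowerSeries τ ℝ) (e : τ →₀ ℕ) :
    MvPowerSeries.coeff e (psSubst f g) = ∑ dd ∈ degLE σ (e.sum fun _ n => n),
      (MvPowerSeries.coeff dd f) *
        MvPowerSeries.coeff e (dd.prod fun i k => g i ^ k) := by
  have : MvPowerSeries.coeff e (psSubst f g) =
      MvPowerSeries.coeff e
        (MvPolynomial.aeval g (truncTotalDeg (e.sum fun _ n => n) f)) := rfl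
  rw [this, truncTotalDeg, map_sum, map_sum]
  apply Finset.sum_congr rfl
  intro dd _
  rw [MvPolynomial.aeval_monomial, ← Algebra.smul_def, LinearMap.map_smul, smul_eq_mul]

/-- order ≥ 2 for any psSubst of an order-≥-2 series along zero-constant-term series. -/
theorem ordGe_two_psSubst {σ : Type*} [Fintype σ] {f : MvPowerSeries σ ℝ}
    (hf : ∀ m : σ →₀ ℕ, (m.sum fun _ a => a) ≤ 1 → MvPowerSeries.coeff m f = 0)
    {g : σ → MvPowerSeries τ ℝ} (hg : ∀ i, ordGe 1 (g i)) :
    ordGe 2 (psSubst f g) := by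
  intro e he
  rw [coeff_psSubst]
  apply Finset.sum_eq_zero
  intro dd _
  rcases le_or_gt (dd.sum fun _ n => n) 1 with h | h
  · rw [hf dd h, zero_mul]
  · rw [ordGe_finsuppProd hg dd e (by omega), mul_zero]

theorem psSubst_congr {σ : Type*} [Fintype σ] {f : MvPowerSeries σ ℝ}
    (hf : ∀ m : σ →₀ ℕ, (m.sum fun _ a => a) ≤ 1 → MvPowerSeries.coeff m f = 0)
    {g g' : σ → MvPowerSeries τ ℝ} (hg : ∀ i, ordGe 1 (g i)) (hg' : ∀ i, ordGe 1 (g' i))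
    {N : ℕ} (hd : ∀ i, ordGe N (g i - g' i)) (e : τ →₀ ℕ)
    (he : (e.sum fun _ n => n) ≤ N) :
    MvPowerSeries.coeff e (psSubst f g) = MvPowerSeries.coeff e (psSubst f g') := by
  rcases Nat.eq_zero_or_pos N with rfl | hN
  · rw [ordGe_two_psSubst hf hg e (by omega), ordGe_two_psSubst hf hg' e (by omega)]
  rw [coeff_psSubst, coeff_psSubst]
  apply Finset.sum_congr rfl
  intro dd _
  rcases le_or_gt (dd.sum fun _ n => n) 1 with h | h
  · rw [hf dd h, zero_mul, zero_mul]
  · congr 1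
    have h0 := ordGe_prod_sub hN hg hg' hd dd e (by omega)
    rw [map_sub, sub_eq_zero] at h0
    exact h0

theorem wt_eq_zero {e : τ →₀ ℕ} (h : (e.sum fun _ n => n) = 0) : e = 0 := by
  ext a
  by_cases ha : a ∈ e.support
  · have := Finset.sum_eq_zero_iff.mp h a ha
    simpa using this
  · simpa using Finsupp.notMem_support_iff.mp ha

theorem ordGe_one_iff {f : MvPowerSeries τ ℝ} :
    ordGe 1 f ↔ MvPowerSeries.coeff 0 f = 0 := by
  constructor
  · intro h; exact h 0 (by simp)
  · intro h e he
    have : e = 0 := wt_eq_zero (by omega)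
    rwa [this]

theorem ordGe_one_X {n : ℕ} (i : Fin n) : ordGe 1 (MvPowerSeries.X i : MvPowerSeries (Fin n) ℝ) := by
  rw [ordGe_one_iff]
  simp

end FIFT

open FIFT

noncomputable def Vseq (n d : ℕ) (r : Fin d → MvPowerSeries (Fin n ⊕ Fin d) ℝ) :
    ℕ → Fin d → MvPowerSeries (Fin n) ℝ
  | 0 => 0
  | k + 1 => fun j => psSubst (r j) (Sum.elim (fun i => MvPowerSeries.X i) (Vseq n d r k))

section Main

variable {n d : ℕ} {r : Fin d → MvPowerSeries (Fin n ⊕ Fin d) ℝ}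
variable (hr : ∀ j, ∀ m : (Fin n ⊕ Fin d) →₀ ℕ, (m.sum fun _ a => a) ≤ 1 →
      MvPowerSeries.coeff m (r j) = 0)

theorem elim_ordGe_one {v : Fin d → MvPowerSeries (Fin n) ℝ}
    (hv : ∀ j, ordGe 1 (v j)) (i : Fin n ⊕ Fin d) :
    ordGe 1 (Sum.elim (fun i => MvPowerSeries.X i) v i) := by
  rcases i with i | j
  · exact ordGe_one_X i
  · exact hv j

include hr in
theorem Vseq_ordGe_one : ∀ k j, ordGe 1 (Vseq n d r k j) := by
  intro k
  induction k with
  | zero => intro j; exact ordGe_zero 1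
  | succ m ih =>
      intro j
      exact ordGe_of_le (by omega) (ordGe_two_psSubst (hr j) (elim_ordGe_one ih))

include hr in
theorem Vseq_stab : ∀ N k k', N ≤ k → N ≤ k' → ∀ j (e : Fin n →₀ ℕ),
    (e.sum fun _ m => m) < N →
    MvPowerSeries.coeff e (Vseq n d r k j) = MvPowerSeries.coeff e (Vseq n d r k' j) := by
  intro N
  induction N with
  | zero => intro k k' _ _ j e he; omega
  | succ N ih =>
      intro k k' hk hk' j e he
      obtain ⟨a, rfl⟩ : ∃ a, k = a + 1 := ⟨k - 1, by omega⟩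
      obtain ⟨b, rfl⟩ : ∃ b, k' = b + 1 := ⟨k' - 1, by omega⟩
      show MvPowerSeries.coeff e (psSubst (r j) _) = MvPowerSeries.coeff e (psSubst (r j) _)
      apply psSubst_congr (hr j) (elim_ordGe_one (Vseq_ordGe_one hr a))
        (elim_ordGe_one (Vseq_ordGe_one hr b)) (N := N) _ e (by omega)
      intro i
      rcases i with i | j'
      · simpa using ordGe_zero N
      · intro e' he'
        rw [map_sub, sub_eq_zero]
        exact ih a b (by omega) (by omega) j' e' he'

noncomputable def vlim (n d : ℕ) (r : Fin d → MvPowerSeries (Fin n ⊕ Fin d) ℝ)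
    (j : Fin d) : MvPowerSeries (Fin n) ℝ :=
  fun e => MvPowerSeries.coeff e (Vseq n d r ((e.sum fun _ m => m) + 1) j)

theorem coeff_vlim (j : Fin d) (e : Fin n →₀ ℕ) :
    MvPowerSeries.coeff e (vlim n d r j) =
      MvPowerSeries.coeff e (Vseq n d r ((e.sum fun _ m => m) + 1) j) := rfl

include hr in
theorem coeff_vlim_eq (j : Fin d) (e : Fin n →₀ ℕ) {k : ℕ} (hk : (e.sum fun _ m => m) < k) :
    MvPowerSeries.coeff e (vlim n d r j) = MvPowerSeries.coeff e (Vseq n d r k j) := by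
  rw [coeff_vlim]
  exact Vseq_stab hr ((e.sum fun _ m => m) + 1) _ _ (le_refl _) (by omega) j e (by omega)

include hr in
theorem vlim_ordGe_one (j : Fin d) : ordGe 1 (vlim n d r j) := by
  intro e he
  rw [coeff_vlim_eq hr j e (k := 1) (by omega)]
  exact Vseq_ordGe_one hr 1 j e (by omega)

include hr in
theorem vlim_fixed (j : Fin d) :
    vlim n d r j = psSubst (r j) (Sum.elim (fun i => MvPowerSeries.X i) (vlim n d r)) := by
  apply MvPowerSeries.ext
  intro e
  set k := (e.sum fun _ m => m) with hk
  rw [coeff_vlim_eq hr j e (k := k + 1) (by omega)]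
  show MvPowerSeries.coeff e (psSubst (r j) _) = _
  apply psSubst_congr (hr j) (elim_ordGe_one (Vseq_ordGe_one hr k))
    (elim_ordGe_one (vlim_ordGe_one hr)) (N := k) _ e (le_refl _)
  intro i
  rcases i with i | j'
  · simpa using ordGe_zero k
  · intro e' he'
    rw [map_sub, sub_eq_zero]
    exact (coeff_vlim_eq hr j' e' (k := k) he').symm

end Main

/-- The formal implicit function theorem: the system `v = r(x, v)`, with `r` of
order ≥ 2, has a unique formal power series solution `v` with zero constant term. -/
theorem formal_implicit_function_theorem (n d : ℕ)
    (r : Fin d → MvPowerSeries (Fin n ⊕ Fin d) ℝ)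
    (hr : ∀ j, ∀ m : (Fin n ⊕ Fin d) →₀ ℕ, (m.sum fun _ a => a) ≤ 1 →
      MvPowerSeries.coeff m (r j) = 0) :
    ∃! v : Fin d → MvPowerSeries (Fin n) ℝ,
      (∀ j, MvPowerSeries.constantCoeff (σ := Fin n) (R := ℝ) (v j) = 0) ∧
      ∀ j, v j = psSubst (r j) (Sum.elim (fun i => MvPowerSeries.X i) v) := by
  refine ⟨vlim n d r, ⟨?_, fun j => vlim_fixed hr j⟩, ?_⟩
  · intro j
    rw [← MvPowerSeries.coeff_zero_eq_constantCoeff_apply]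
    exact vlim_ordGe_one hr j 0 (by simp)
  · rintro v ⟨hv0, hvfix⟩
    have hv1 : ∀ j, ordGe 1 (v j) := by
      intro j
      rw [ordGe_one_iff, MvPowerSeries.coeff_zero_eq_constantCoeff_apply]
      exact hv0 j
    have key : ∀ N (e : Fin n →₀ ℕ), (e.sum fun _ m => m) < N → ∀ j,
        MvPowerSeries.coeff e (v j) = MvPowerSeries.coeff e (vlim n d r j) := by
      intro N
      induction N with
      | zero => intro e he; omega
      | succ N ih =>
          intro e he j
          rw [hvfix j, vlim_fixed hr j]
          apply psSubst_congr (hr j) (elim_ordGe_one hv1)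
            (elim_ordGe_one (vlim_ordGe_one hr)) (N := N) _ e (by omega)
          intro i
          rcases i with i | j'
          · simpa using ordGe_zero N
          · intro e' he'
            rw [map_sub, sub_eq_zero]
            exact ih e' he' j'
    funext j
    apply MvPowerSeries.ext
    intro e
    exact key ((e.sum fun _ m => m) + 1) e (by omega) j
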